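/- Consider two adversarial configurations over the same A that differ only in that the second configuration's per-target influencer sets satisfy A_i ⊆ A'_i for every i ∈ U, with p ≥ 0 small enough that (1 − |A'_i|p) ≥ 0. If every original incoming weight from normal neighbors carries opinion at most 1 and the normal agents' equilibrium opinions are at most 1, then g_{A,{A_i}} ≤ g_{A,{A'_i}}: enlarging the influencer sets (weakly) increases the aggregate adversarial outcome. -/

import Mathlib

section Aux
variable {n : Type*} [Fintype n] [DecidableEq n]

attribute [local instance] Matrix.linftyOpNormedRing Matrix.linftyOpNormedAlgebra

private lemma rowsum_norm_lt_one (K : Matrix n n ℝ) (h : ∀ i, ∑ j, ‖K i j‖ < 1) :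
    ‖K‖ < 1 := by
  rw [Matrix.linfty_opNorm_def]
  have h' : ∀ i, (∑ j, ‖K i j‖₊) < 1 := by
    intro i
    rw [← NNReal.coe_lt_coe]
    push_cast
    simpa [coe_nnnorm] using h i
  have : ((Finset.univ : Finset n).sup fun i => ∑ j, ‖K i j‖₊) < 1 :=
    (Finset.sup_lt_iff (by norm_num)).mpr fun i _ => h' i
  exact_mod_cast this

private lemma pow_entry_nonneg (K : Matrix n n ℝ) (hK : ∀ i j, 0 ≤ K i j) (m : ℕ) :
    ∀ i j, 0 ≤ (K ^ m) i j := by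
  induction m with
  | zero => intro i j; simp [Matrix.one_apply]; positivity
  | succ m ih =>
    intro i j
    rw [pow_succ, Matrix.mul_apply]
    exact Finset.sum_nonneg fun k _ => mul_nonneg (ih i k) (hK k j)

private lemma inv_one_sub_entry_nonneg (K : Matrix n n ℝ) (hK : ∀ i j, 0 ≤ K i j)
    (h : ‖K‖ < 1) (i j : n) : 0 ≤ (1 - K)⁻¹ i j := by
  have hsum : Summable (fun m : ℕ => K ^ m) := summable_geometric_of_norm_lt_one h
  have hinv : (1 - K)⁻¹ = ∑' m : ℕ, K ^ m := by
    rw [Matrix.nonsing_inv_eq_ringInverse, ← geom_series_eq_inverse K h]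
    rfl
  let f : Matrix n n ℝ →ₗ[ℝ] ℝ :=
    { toFun := fun M => M i j
      map_add' := fun M N => rfl
      map_smul' := fun c M => rfl }
  have hent : (∑' m : ℕ, K ^ m) i j = ∑' m : ℕ, (K ^ m) i j := by
    have := (LinearMap.toContinuousLinearMap f).map_tsum hsum
    exact this
  rw [hinv, hent]
  exact tsum_nonneg fun m => pow_entry_nonneg K hK m i j

private lemma mulVec_apply' {m : Type*} [Fintype m] (M : Matrix n m ℝ) (v : m → ℝ) (i : n) :
    M.mulVec v i = ∑ j, M i j * v j := rfl

private lemma mono_key (K K' : Matrix n n ℝ) (b b' : n → ℝ)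
    (hK' : ∀ i j, 0 ≤ K' i j)
    (hnK : ‖K‖ < 1) (hnK' : ‖K'‖ < 1)
    (h : ∀ i, 0 ≤ (b' i - b i) + (K' - K).mulVec ((1 - K)⁻¹.mulVec b) i) :
    ∀ i, (1 - K)⁻¹.mulVec b i ≤ (1 - K')⁻¹.mulVec b' i := by
  have hu : IsUnit (1 - K) := isUnit_one_sub_of_norm_lt_one hnK
  have hu' : IsUnit (1 - K') := isUnit_one_sub_of_norm_lt_one hnK'
  have hdet : IsUnit (1 - K).det := (Matrix.isUnit_iff_isUnit_det _).mp hu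
  have hdet' : IsUnit (1 - K').det := (Matrix.isUnit_iff_isUnit_det _).mp hu'
  set z := (1 - K)⁻¹.mulVec b with hzdef
  set z' := (1 - K')⁻¹.mulVec b' with hzdef'
  have hz : (1 - K).mulVec z = b := by
    rw [hzdef, Matrix.mulVec_mulVec, Matrix.mul_nonsing_inv _ hdet, Matrix.one_mulVec]
  have hz' : (1 - K').mulVec z' = b' := by
    rw [hzdef', Matrix.mulVec_mulVec, Matrix.mul_nonsing_inv _ hdet', Matrix.one_mulVec]
  have step : (1 - K').mulVec (z' - z) = fun i => (b' i - b i) + (K' - K).mulVec z i := by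
    funext i
    have e1 : (1 - K').mulVec (z' - z) = b' - ((1 - K').mulVec z) := by
      rw [Matrix.mulVec_sub, hz']
    have e2 : (1 - K).mulVec z = z - K.mulVec z := by
      rw [Matrix.sub_mulVec, Matrix.one_mulVec]
    have e3 : (1 - K').mulVec z = z - K'.mulVec z := by
      rw [Matrix.sub_mulVec, Matrix.one_mulVec]
    have hb : b i = z i - K.mulVec z i := by rw [← hz, e2]; rfl
    have : (1 - K').mulVec (z' - z) i = b' i - (z i - K'.mulVec z i) := by
      rw [e1, e3]; rfl
    rw [this, Matrix.sub_mulVec]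
    simp only [Pi.sub_apply, hb]
    ring
  have hrec : z' - z = (1 - K')⁻¹.mulVec ((1 - K').mulVec (z' - z)) := by
    rw [Matrix.mulVec_mulVec, Matrix.nonsing_inv_mul _ hdet', Matrix.one_mulVec]
  have hrec2 : z' - z = (1 - K')⁻¹.mulVec (fun i => (b' i - b i) + (K' - K).mulVec z i) := by
    rw [← step]; exact hrec
  intro i
  have : 0 ≤ (z' - z) i := by
    rw [hrec2]
    show 0 ≤ ∑ j, (1 - K')⁻¹ i j * _
    exact Finset.sum_nonneg fun j _ =>
      mul_nonneg (inv_one_sub_entry_nonneg _ hK' hnK' i j) (h j)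
  simpa [sub_nonneg] using this

/-- Consider two adversarial configurations over the same adversarial set
A whose per-target influencer sets satisfy A_i ⊆ A'_i for every normal agent i, with
p ≥ 0 small enough that 1 − |A'_i|p ≥ 0. If the intrinsic opinions of normal agents lie
in [0,1] and the normal agents' equilibrium opinions (for the smaller configuration) are
at most 1, then g_{A,{A_i}} ≤ g_{A,{A'_i}}: enlarging the influencer sets weakly
increases the aggregate adversarial outcome. -/
theorem stmt19 (N : ℕ) (W : Matrix (Fin N) (Fin N) ℝ) (θ s : Fin N → ℝ)
    (A : Finset (Fin N)) (B B' : Fin N → Finset (Fin N)) (p : ℝ)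
    (hW0 : ∀ i j, 0 ≤ W i j) (hW1 : ∀ i, ∑ j, W i j = 1)
    (hθ : ∀ i ∉ A, θ i ∈ Set.Ioc (0 : ℝ) 1)
    (hs : ∀ i ∉ A, s i ∈ Set.Icc (0 : ℝ) 1)
    (hBB' : ∀ i, B i ⊆ B' i) (hB' : ∀ i, B' i ⊆ A)
    (hp : 0 ≤ p) (hp' : ∀ i, 0 ≤ 1 - ((B' i).card : ℝ) * p) :
    let Wmod : (Fin N → Finset (Fin N)) → Matrix (Fin N) (Fin N) ℝ := fun C =>
      Matrix.of fun i j =>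
        (1 - ((C i).card : ℝ) * p) * W i j + (if j ∈ C i then p else 0)
    let ΘU : Matrix {i : Fin N // i ∉ A} {i : Fin N // i ∉ A} ℝ :=
      Matrix.diagonal fun i => θ i.1
    let zU : (Fin N → Finset (Fin N)) → ({i : Fin N // i ∉ A} → ℝ) := fun C =>
      (1 - (1 - ΘU) * (Matrix.of fun i j : {i : Fin N // i ∉ A} => Wmod C i.1 j.1))⁻¹.mulVec
        (ΘU.mulVec (fun i => s i.1) +
          ((1 - ΘU) *
            (Matrix.of fun (i : {i : Fin N // i ∉ A}) (j : {i : Fin N // i ∈ A}) =>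
              Wmod C i.1 j.1)).mulVec fun _ => 1)
    (∀ i, zU B i ≤ 1) →
    (∑ i, zU B i) + (A.card : ℝ) ≤ (∑ i, zU B' i) + (A.card : ℝ) := by
  intro Wmod ΘU zU hz1
  classical
  have hθpos : ∀ i : {i : Fin N // i ∉ A}, 0 < θ i.1 := fun i => (hθ i.1 i.2).1
  have hθle : ∀ i : {i : Fin N // i ∉ A}, θ i.1 ≤ 1 := fun i => (hθ i.1 i.2).2
  have hcB : ∀ i, 0 ≤ 1 - ((B i).card : ℝ) * p := by
    intro i
    have h1 := hp' i
    have h2 : ((B i).card : ℝ) ≤ ((B' i).card : ℝ) := by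
      exact_mod_cast Finset.card_le_card (hBB' i)
    nlinarith
  have hWmod0 : ∀ (C : Fin N → Finset (Fin N)),
      (∀ i, 0 ≤ 1 - ((C i).card : ℝ) * p) → ∀ i j, 0 ≤ Wmod C i j := by
    intro C hC i j
    have h1 : (0:ℝ) ≤ (if j ∈ C i then p else 0) := by split_ifs <;> simp [hp]
    exact add_nonneg (mul_nonneg (hC i) (hW0 i j)) h1
  have hWmodsum : ∀ (C : Fin N → Finset (Fin N)) (i : Fin N), ∑ j, Wmod C i j = 1 := by
    intro C i
    show ∑ j, ((1 - ((C i).card : ℝ) * p) * W i j + (if j ∈ C i then p else 0)) = 1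
    rw [Finset.sum_add_distrib, ← Finset.mul_sum, hW1 i, mul_one,
      Finset.sum_ite_mem, Finset.univ_inter, Finset.sum_const, nsmul_eq_mul]
    ring
  have hdiag : (1 : Matrix {i : Fin N // i ∉ A} {i : Fin N // i ∉ A} ℝ) - ΘU
      = Matrix.diagonal (fun i : {i : Fin N // i ∉ A} => 1 - θ i.1) := by
    show (1 : Matrix _ _ ℝ) - Matrix.diagonal (fun i : {i : Fin N // i ∉ A} => θ i.1) = _
    ext i j
    by_cases h : i = j <;>
      simp [Matrix.one_apply, Matrix.diagonal_apply, Matrix.sub_apply, h]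
  have hsumU : ∀ f : Fin N → ℝ, ∑ j : {i : Fin N // i ∉ A}, f j.1 = ∑ j ∈ Aᶜ, f j := by
    intro f
    exact (Finset.sum_subtype Aᶜ (fun x => Finset.mem_compl) f).symm
  have hsumA : ∀ f : Fin N → ℝ, ∑ j : {i : Fin N // i ∈ A}, f j.1 = ∑ j ∈ A, f j := by
    intro f
    exact (Finset.sum_subtype A (fun x => Iff.rfl) f).symm
  have hnorm : ∀ (C : Fin N → Finset (Fin N)), (∀ i j, 0 ≤ Wmod C i j) →
      ‖(1 - ΘU) * (Matrix.of fun i j : {i : Fin N // i ∉ A} => Wmod C i.1 j.1)‖ < 1 := by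
    intro C hC
    apply rowsum_norm_lt_one
    intro i
    have h1θ : 0 ≤ 1 - θ i.1 := by linarith [hθle i]
    have e1 : ∑ j : {i : Fin N // i ∉ A},
        ‖((1 - ΘU) * (Matrix.of fun i j : {i : Fin N // i ∉ A} => Wmod C i.1 j.1)) i j‖
        = (1 - θ i.1) * ∑ j ∈ Aᶜ, Wmod C i.1 j := by
      rw [← hsumU fun j => Wmod C i.1 j, Finset.mul_sum]
      refine Finset.sum_congr rfl fun j _ => ?_
      rw [hdiag, Matrix.diagonal_mul, Matrix.of_apply, Real.norm_eq_abs,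
        abs_of_nonneg (mul_nonneg h1θ (hC _ _))]
    rw [e1]
    have e2 : ∑ j ∈ Aᶜ, Wmod C i.1 j ≤ 1 := by
      rw [← hWmodsum C i.1]
      exact Finset.sum_le_sum_of_subset_of_nonneg (Finset.subset_univ _)
        (fun j _ _ => hC i.1 j)
    calc (1 - θ i.1) * (∑ j ∈ Aᶜ, Wmod C i.1 j) ≤ 1 - θ i.1 :=
          mul_le_of_le_one_right h1θ e2
      _ < 1 := by linarith [hθpos i]
  set K := (1 - ΘU) * (Matrix.of fun i j : {i : Fin N // i ∉ A} => Wmod B i.1 j.1) with hK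
  set K' := (1 - ΘU) * (Matrix.of fun i j : {i : Fin N // i ∉ A} => Wmod B' i.1 j.1) with hK'
  set b := ΘU.mulVec (fun i => s i.1) +
      ((1 - ΘU) * (Matrix.of fun (i : {i : Fin N // i ∉ A}) (j : {i : Fin N // i ∈ A}) =>
        Wmod B i.1 j.1)).mulVec (fun _ => 1) with hb
  set b' := ΘU.mulVec (fun i => s i.1) +
      ((1 - ΘU) * (Matrix.of fun (i : {i : Fin N // i ∉ A}) (j : {i : Fin N // i ∈ A}) =>
        Wmod B' i.1 j.1)).mulVec (fun _ => 1) with hb'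
  have hK'0 : ∀ i j, 0 ≤ K' i j := by
    intro i j
    rw [hK', hdiag, Matrix.diagonal_mul, Matrix.of_apply]
    exact mul_nonneg (by linarith [hθle i]) (hWmod0 B' hp' _ _)
  have hnK : ‖K‖ < 1 := hnorm B (hWmod0 B hcB)
  have hnK' : ‖K'‖ < 1 := hnorm B' (hWmod0 B' hp')
  have hzle : ∀ i, ((1 - K)⁻¹.mulVec b) i ≤ 1 := hz1
  have hkey : ∀ i, 0 ≤ (b' i - b i) + (K' - K).mulVec ((1 - K)⁻¹.mulVec b) i := by
    intro i
    set z : {i : Fin N // i ∉ A} → ℝ := (1 - K)⁻¹.mulVec b with hzdef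
    have h1θ : 0 ≤ 1 - θ i.1 := by linarith [hθle i]
    have hbsub : b' i - b i = (1 - θ i.1) *
        ∑ j ∈ A, (Wmod B' i.1 j - Wmod B i.1 j) := by
      have e : ∀ (C : Fin N → Finset (Fin N)),
          (((1 - ΘU) * (Matrix.of fun (i : {i : Fin N // i ∉ A}) (j : {i : Fin N // i ∈ A}) =>
            Wmod C i.1 j.1)).mulVec (fun _ => 1)) i
          = (1 - θ i.1) * ∑ j ∈ A, Wmod C i.1 j := by
        intro C
        rw [mulVec_apply', ← hsumA fun j => Wmod C i.1 j, Finset.mul_sum]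
        refine Finset.sum_congr rfl fun j _ => ?_
        rw [hdiag, Matrix.diagonal_mul, Matrix.of_apply, mul_one]
      rw [hb, hb']
      simp only [Pi.add_apply]
      rw [add_sub_add_left_eq_sub, e B', e B, ← mul_sub, ← Finset.sum_sub_distrib]
    have hKsub : (K' - K).mulVec z i = (1 - θ i.1) *
        ∑ j : {i : Fin N // i ∉ A}, (Wmod B' i.1 j.1 - Wmod B i.1 j.1) * z j := by
      rw [mulVec_apply', Finset.mul_sum]
      refine Finset.sum_congr rfl fun j _ => ?_
      rw [Matrix.sub_apply, hK', hK, hdiag, Matrix.diagonal_mul, Matrix.diagonal_mul,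
        Matrix.of_apply, Matrix.of_apply]
      ring
    have hAsum : ∑ j ∈ A, (Wmod B' i.1 j - Wmod B i.1 j)
        = (((B i.1).card : ℝ) - ((B' i.1).card : ℝ)) * p * (∑ j ∈ A, W i.1 j)
          + (((B' i.1).card : ℝ) - ((B i.1).card : ℝ)) * p := by
      have h1 : ∑ j ∈ A, (if j ∈ B' i.1 then p else 0) = ((B' i.1).card : ℝ) * p := by
        rw [Finset.sum_ite_mem, Finset.inter_eq_right.mpr (hB' i.1), Finset.sum_const,
          nsmul_eq_mul]
      have h2 : ∑ j ∈ A, (if j ∈ B i.1 then p else 0) = ((B i.1).card : ℝ) * p := by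
        rw [Finset.sum_ite_mem, Finset.inter_eq_right.mpr ((hBB' i.1).trans (hB' i.1)),
          Finset.sum_const, nsmul_eq_mul]
      have hterm : ∀ j, Wmod B' i.1 j - Wmod B i.1 j
          = (((B i.1).card : ℝ) - ((B' i.1).card : ℝ)) * p * W i.1 j
            + ((if j ∈ B' i.1 then p else 0) - (if j ∈ B i.1 then p else 0)) := by
        intro j
        show ((1 - ((B' i.1).card : ℝ) * p) * W i.1 j + (if j ∈ B' i.1 then p else 0))
          - ((1 - ((B i.1).card : ℝ) * p) * W i.1 j + (if j ∈ B i.1 then p else 0)) = _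
        ring
      rw [Finset.sum_congr rfl fun j _ => hterm j, Finset.sum_add_distrib, ← Finset.mul_sum,
        Finset.sum_sub_distrib, h1, h2]
      ring
    have hUsum : ∑ j : {i : Fin N // i ∉ A}, (Wmod B' i.1 j.1 - Wmod B i.1 j.1) * z j
        = (((B i.1).card : ℝ) - ((B' i.1).card : ℝ)) * p
          * ∑ j : {i : Fin N // i ∉ A}, W i.1 j.1 * z j := by
      rw [Finset.mul_sum]
      refine Finset.sum_congr rfl fun j _ => ?_
      have hj1 : j.1 ∉ B' i.1 := fun h => j.2 (hB' i.1 h)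
      have hj2 : j.1 ∉ B i.1 := fun h => j.2 (hB' i.1 (hBB' i.1 h))
      show ((1 - ((B' i.1).card : ℝ) * p) * W i.1 j.1 + (if j.1 ∈ B' i.1 then p else 0)
          - ((1 - ((B i.1).card : ℝ) * p) * W i.1 j.1 + (if j.1 ∈ B i.1 then p else 0))) * z j
        = _
      rw [if_neg hj1, if_neg hj2]
      ring
    have hd : 0 ≤ (((B' i.1).card : ℝ) - ((B i.1).card : ℝ)) * p := by
      have h2 : ((B i.1).card : ℝ) ≤ ((B' i.1).card : ℝ) := by
        exact_mod_cast Finset.card_le_card (hBB' i.1)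
      nlinarith
    have hSZ : ∑ j : {i : Fin N // i ∉ A}, W i.1 j.1 * z j ≤ ∑ j ∈ Aᶜ, W i.1 j := by
      rw [← hsumU fun j => W i.1 j]
      exact Finset.sum_le_sum fun j _ => mul_le_of_le_one_right (hW0 i.1 j.1) (hzle j)
    have hsplit : ∑ j ∈ A, W i.1 j + ∑ j ∈ Aᶜ, W i.1 j = 1 := by
      rw [Finset.sum_add_sum_compl, hW1]
    have hbr : 0 ≤ 1 - (∑ j ∈ A, W i.1 j)
        - ∑ j : {i : Fin N // i ∉ A}, W i.1 j.1 * z j := by linarith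
    rw [hbsub, hKsub, hAsum, hUsum]
    nlinarith [mul_nonneg (mul_nonneg h1θ hd) hbr]
  have hmono : ∀ i, ((1 - K)⁻¹.mulVec b) i ≤ ((1 - K')⁻¹.mulVec b') i :=
    mono_key K K' b b' hK'0 hnK hnK' hkey
  have hmono' : ∀ i, zU B i ≤ zU B' i := hmono
  exact add_le_add_left (Finset.sum_le_sum fun i _ => hmono' i) _

end Aux
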